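/- Let A be a dendriform Hopf algebra connected as a coalgebra, with A^{≺2} = Prim(A) ≺ A_+. Then: (1) A_+ = Prim(A) ⊕ A^{≺2}; (2) A^{≺2} = A_+ ≺ A_+; (3) A^{≺2} is a left ideal of A for the product * = ≺ + ≻. -/

import Mathlib

/-!
Dendriform Hopf algebras. We model the augmentation ideal A_+ of a dendriform Hopf
algebra A as a vector space B with two bilinear products ≺, ≻ and a reduced coproduct
Δ̃ : B → B ⊗ B, subject to the dendriform axioms (1)-(3) and the compatibilities
(4)-(5) between Δ̃ and ≺, ≻ (in Sweedler-free form, using the middle-four interchange).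
-/

open TensorProduct

noncomputable section

variable {K B : Type*} [Field K] [AddCommGroup B] [Module K B]

/-- The filtration by the kernels of the iterated reduced coproducts
(over a field, ker(Δ̃⁽ⁿ⁺¹⁾) = Δ̃⁻¹(ker(Δ̃⁽ⁿ⁾) ⊗ B)). -/
def coradFilt (delta : B →ₗ[K] B ⊗[K] B) : ℕ → Submodule K B
  | 0 => LinearMap.ker delta
  | n + 1 => Submodule.comap delta
      (LinearMap.range (TensorProduct.mapIncl (coradFilt delta n) (⊤ : Submodule K B)))

/-- The dendriform Hopf algebra axioms. -/
structure IsDendriformHopf (prec succ : B →ₗ[K] B →ₗ[K] B)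
    (delta : B →ₗ[K] B ⊗[K] B) : Prop where
  coassoc : (TensorProduct.assoc K B B B).toLinearMap ∘ₗ
      TensorProduct.map delta (LinearMap.id : B →ₗ[K] B) ∘ₗ delta =
    TensorProduct.map (LinearMap.id : B →ₗ[K] B) delta ∘ₗ delta
  ax1 : ∀ x y z : B, prec (prec x y) z = prec x ((prec + succ) y z)
  ax2 : ∀ x y z : B, prec (succ x y) z = succ x (prec y z)
  ax3 : ∀ x y z : B, succ ((prec + succ) x y) z = succ x (succ y z)
  ax4 : ∀ a b : B,
    delta (prec a b) =
      TensorProduct.map (TensorProduct.lift (prec + succ)) (TensorProduct.lift prec)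
        (TensorProduct.tensorTensorTensorComm K B B B B (delta a ⊗ₜ[K] delta b))
      + TensorProduct.map ((prec + succ).flip b) (LinearMap.id : B →ₗ[K] B) (delta a)
      + TensorProduct.map (LinearMap.id : B →ₗ[K] B) (prec a) (delta b)
      + TensorProduct.map (LinearMap.id : B →ₗ[K] B) (prec.flip b) (delta a)
      + b ⊗ₜ[K] a
  ax5 : ∀ a b : B,
    delta (succ a b) =
      TensorProduct.map (TensorProduct.lift (prec + succ)) (TensorProduct.lift succ)
        (TensorProduct.tensorTensorTensorComm K B B B B (delta a ⊗ₜ[K] delta b))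
      + TensorProduct.map ((prec + succ) a) (LinearMap.id : B →ₗ[K] B) (delta b)
      + TensorProduct.map (LinearMap.id : B →ₗ[K] B) (succ a) (delta b)
      + TensorProduct.map (LinearMap.id : B →ₗ[K] B) (succ.flip b) (delta a)
      + a ⊗ₜ[K] b

/-- Connectedness: every element is killed by some iterated reduced coproduct. -/
def IsConnectedCoalg (delta : B →ₗ[K] B ⊗[K] B) : Prop :=
  ∀ x : B, ∃ n, x ∈ coradFilt delta n

namespace Stmt18Aux

variable {prec succ : B →ₗ[K] B →ₗ[K] B} {delta : B →ₗ[K] B ⊗[K] B}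

/-- Kill a linear map on a subspace of the form `B ⊗ W`. -/
lemma killR {C : Type*} [AddCommGroup C] [Module K C] {W : Submodule K B}
    (κ : B ⊗[K] B →ₗ[K] C) (h : ∀ (a : B), ∀ b ∈ W, κ (a ⊗ₜ[K] b) = 0)
    {u : B ⊗[K] B} (hu : u ∈ LinearMap.range (mapIncl (⊤ : Submodule K B) W)) :
    κ u = 0 := by
  obtain ⟨v, rfl⟩ := hu
  have hcomp : κ ∘ₗ mapIncl (⊤ : Submodule K B) W = 0 := by
    apply TensorProduct.ext'
    rintro ⟨a, -⟩ ⟨b, hb⟩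
    simpa [mapIncl] using h a b hb
  exact DFunLike.congr_fun hcomp v

lemma eqR {C : Type*} [AddCommGroup C] [Module K C] {W : Submodule K B}
    (κ₁ κ₂ : B ⊗[K] B →ₗ[K] C) (h : ∀ (a : B), ∀ b ∈ W, κ₁ (a ⊗ₜ[K] b) = κ₂ (a ⊗ₜ[K] b))
    {u : B ⊗[K] B} (hu : u ∈ LinearMap.range (mapIncl (⊤ : Submodule K B) W)) :
    κ₁ u = κ₂ u := by
  have := killR (κ₁ - κ₂) (fun a b hb => by
    simp only [LinearMap.sub_apply, h a b hb, sub_self]) hu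
  simpa [sub_eq_zero] using this

/-- Kill a linear map on a subspace of the form `W ⊗ B`. -/
lemma killL {C : Type*} [AddCommGroup C] [Module K C] {W : Submodule K B}
    (κ : B ⊗[K] B →ₗ[K] C) (h : ∀ a ∈ W, ∀ (b : B), κ (a ⊗ₜ[K] b) = 0)
    {u : B ⊗[K] B} (hu : u ∈ LinearMap.range (mapIncl W (⊤ : Submodule K B))) :
    κ u = 0 := by
  obtain ⟨v, rfl⟩ := hu
  have hcomp : κ ∘ₗ mapIncl W (⊤ : Submodule K B) = 0 := by
    apply TensorProduct.ext'
    rintro ⟨a, ha⟩ ⟨b, -⟩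
    simpa [mapIncl] using h a ha b
  exact DFunLike.congr_fun hcomp v

lemma range_mapIncl_top_right (W : Submodule K B) :
    LinearMap.range (mapIncl (⊤ : Submodule K B) W) =
      LinearMap.range (LinearMap.lTensor B W.subtype) := by
  rw [mapIncl, show LinearMap.lTensor B W.subtype = TensorProduct.map LinearMap.id W.subtype
    from rfl, TensorProduct.range_map_eq_span_tmul, TensorProduct.range_map_eq_span_tmul]
  congr 1
  ext z
  constructor
  · rintro ⟨m, n, rfl⟩; exact ⟨m.1, n, rfl⟩
  · rintro ⟨m, n, rfl⟩; exact ⟨⟨m, trivial⟩, n, rfl⟩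

lemma range_mapIncl_top_left (W : Submodule K B) :
    LinearMap.range (mapIncl W (⊤ : Submodule K B)) =
      LinearMap.range (LinearMap.rTensor B W.subtype) := by
  rw [mapIncl, show LinearMap.rTensor B W.subtype = TensorProduct.map W.subtype LinearMap.id
    from rfl, TensorProduct.range_map_eq_span_tmul, TensorProduct.range_map_eq_span_tmul]
  congr 1
  ext z
  constructor
  · rintro ⟨m, n, rfl⟩; exact ⟨m, n.1, rfl⟩
  · rintro ⟨m, n, rfl⟩; exact ⟨m, ⟨n, trivial⟩, rfl⟩

lemma ker_rTensor_mkQ (W : Submodule K B) :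
    LinearMap.ker (LinearMap.rTensor B W.mkQ) =
      LinearMap.range (mapIncl W (⊤ : Submodule K B)) := by
  rw [rTensor_mkQ, range_mapIncl_top_left]

lemma mem_range_of_lTensor_zero {C : Type*} [AddCommGroup C] [Module K C]
    (ρ : B →ₗ[K] C) {u : B ⊗[K] B} (h : LinearMap.lTensor B ρ u = 0) :
    u ∈ LinearMap.range (mapIncl (⊤ : Submodule K B) (LinearMap.ker ρ)) := by
  have hex : Function.Exact (LinearMap.lTensor B (LinearMap.ker ρ).subtype)
      (LinearMap.lTensor B ρ) :=
    Module.Flat.lTensor_exact B (LinearMap.exact_subtype_ker_map ρ)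
  rw [range_mapIncl_top_right]
  obtain ⟨v, hv⟩ := (hex u).mp h
  exact ⟨v, hv⟩

lemma coradFilt_mono (delta : B →ₗ[K] B ⊗[K] B) : Monotone (coradFilt delta) := by
  apply monotone_nat_of_le_succ
  intro n
  induction n with
  | zero =>
      intro x hx
      simp only [coradFilt, Submodule.mem_comap]
      rw [show delta x = 0 from hx]
      exact zero_mem _
  | succ n ih =>
      intro x hx
      simp only [coradFilt, Submodule.mem_comap] at hx ⊢
      exact range_mapIncl_mono ih le_rfl hx

lemma mem_coradFilt_succ {x : B} {n : ℕ} :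
    x ∈ coradFilt delta (n + 1) ↔
      delta x ∈ LinearMap.range (mapIncl (coradFilt delta n) (⊤ : Submodule K B)) := by
  simp only [coradFilt, Submodule.mem_comap]

/-- The key structure result on the filtration: the reduced coproduct of an element of
`F (n+1)` has its *right* legs in `F n`. -/
lemma deltaMemR (hco : (TensorProduct.assoc K B B B).toLinearMap ∘ₗ
      TensorProduct.map delta (LinearMap.id : B →ₗ[K] B) ∘ₗ delta =
    TensorProduct.map (LinearMap.id : B →ₗ[K] B) delta ∘ₗ delta) :
    ∀ n, ∀ x ∈ coradFilt delta (n + 1),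
      delta x ∈ LinearMap.range (mapIncl (⊤ : Submodule K B) (coradFilt delta n)) := by
  intro n
  induction n with
  | zero =>
      intro x hx
      have h0 : LinearMap.lTensor B delta (delta x) = 0 := by
        have hxx := DFunLike.congr_fun hco x
        simp only [LinearMap.comp_apply] at hxx
        rw [show LinearMap.lTensor B delta = TensorProduct.map LinearMap.id delta from rfl,
          ← hxx]
        refine killL ((TensorProduct.assoc K B B B).toLinearMap ∘ₗ
          TensorProduct.map delta (LinearMap.id : B →ₗ[K] B)) ?_ (mem_coradFilt_succ.mp hx)
        intro a ha b
        have : delta a = 0 := ha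
        simp [this]
      have := mem_range_of_lTensor_zero delta h0
      exact this
  | succ n ih =>
      intro x hx
      set ρ : B →ₗ[K] (B ⧸ coradFilt delta n) ⊗[K] B :=
        LinearMap.rTensor B (coradFilt delta n).mkQ ∘ₗ delta with hρ
      have hker : LinearMap.ker ρ = coradFilt delta (n + 1) := by
        ext y
        simp only [hρ, LinearMap.mem_ker, LinearMap.comp_apply]
        rw [← LinearMap.mem_ker, ker_rTensor_mkQ, mem_coradFilt_succ]
      have h0 : LinearMap.lTensor B ρ (delta x) = 0 := by
        have hrw : LinearMap.lTensor B ρ =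
            LinearMap.lTensor B (LinearMap.rTensor B (coradFilt delta n).mkQ) ∘ₗ
              LinearMap.lTensor B delta := by
          rw [← LinearMap.lTensor_comp]
        rw [hrw]
        have hxx := DFunLike.congr_fun hco x
        simp only [LinearMap.comp_apply] at hxx
        rw [LinearMap.comp_apply,
          show LinearMap.lTensor B delta (delta x) =
            TensorProduct.map LinearMap.id delta (delta x) from rfl, ← hxx]
        refine killL (LinearMap.lTensor B (LinearMap.rTensor B (coradFilt delta n).mkQ) ∘ₗ
          (TensorProduct.assoc K B B B).toLinearMap ∘ₗ
          TensorProduct.map delta (LinearMap.id : B →ₗ[K] B)) ?_ (mem_coradFilt_succ.mp hx)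
        intro a ha b
        simp only [LinearMap.comp_apply, TensorProduct.map_tmul, LinearMap.id_coe, id_eq]
        refine killR (LinearMap.lTensor B (LinearMap.rTensor B (coradFilt delta n).mkQ) ∘ₗ
          (TensorProduct.assoc K B B B).toLinearMap ∘ₗ
          ((TensorProduct.mk K (B ⊗[K] B) B).flip b)) ?_ (ih a ha)
        intro c d hd
        simp only [LinearMap.comp_apply, LinearMap.flip_apply, TensorProduct.mk_apply,
          LinearEquiv.coe_coe, TensorProduct.assoc_tmul, LinearMap.lTensor_tmul,
          LinearMap.rTensor_tmul]
        rw [show (coradFilt delta n).mkQ d = 0 from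
          (Submodule.Quotient.mk_eq_zero _).mpr hd]
        simp
      have := mem_range_of_lTensor_zero ρ h0
      rwa [hker] at this

variable (prec delta) in
/-- The generating set of `A^{≺2} = Prim(A) ≺ A_+`. -/
def genSet : Set B := {z | ∃ p ∈ LinearMap.ker delta, ∃ w : B, z = prec p w}

variable (prec delta) in
/-- The recursively defined family of projections onto the primitives. -/
noncomputable def pbar (p0 : B →ₗ[K] B) : ℕ → B →ₗ[K] B
  | 0 => p0
  | n + 1 => LinearMap.id -
      TensorProduct.lift ((prec ∘ₗ pbar p0 n).flip) ∘ₗ delta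

variable (prec delta) in
noncomputable def gmap (p0 : B →ₗ[K] B) (n : ℕ) : B ⊗[K] B →ₗ[K] B :=
  TensorProduct.lift ((prec ∘ₗ pbar prec delta p0 n).flip)

lemma pbar_succ_apply (p0 : B →ₗ[K] B) (n : ℕ) (y : B) :
    pbar prec delta p0 (n + 1) y = y - gmap prec delta p0 n (delta y) := by
  simp [pbar, gmap]

lemma gmap_tmul (p0 : B →ₗ[K] B) (n : ℕ) (a b : B) :
    gmap prec delta p0 n (a ⊗ₜ[K] b) = prec (pbar prec delta p0 n b) a := by
  simp [gmap]

/-- L1 : the coproduct of `p ≺ b` for a primitive `p`. -/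
lemma L1 (hd : IsDendriformHopf prec succ delta) {p : B} (hp : delta p = 0) (b : B) :
    delta (prec p b) =
      TensorProduct.map (LinearMap.id : B →ₗ[K] B) (prec p) (delta b) + b ⊗ₜ[K] p := by
  rw [hd.ax4 p b, hp]
  simp

section Main

variable (hd : IsDendriformHopf prec succ delta)
variable {p0 : B →ₗ[K] B} (h0V : ∀ x, delta (p0 x) = 0) (h0id : ∀ y ∈ LinearMap.ker delta, p0 y = y)

include hd h0V h0id

/-- The main induction package: compatibility, primitivity and the `A≺²` defect. -/
lemma main : ∀ n : ℕ,
    (∀ y ∈ coradFilt delta n, pbar prec delta p0 (n + 1) y = pbar prec delta p0 n y) ∧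
    (∀ y ∈ coradFilt delta n, delta (pbar prec delta p0 n y) = 0) ∧
    (∀ y ∈ coradFilt delta n,
      y - pbar prec delta p0 n y ∈ Submodule.span K (genSet prec delta)) := by
  intro n
  induction n with
  | zero =>
      refine ⟨?_, ?_, ?_⟩
      · intro y hy
        have hy0 : delta y = 0 := hy
        rw [pbar_succ_apply, hy0]
        simp [pbar, h0id y hy]
      · intro y _
        exact h0V y
      · intro y hy
        simp [pbar, h0id y hy]
  | succ n ih =>
      obtain ⟨ihC, ihP, ihA⟩ := ih
      constructor
      · -- compatibility at level n+1
        intro y hy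
        rw [pbar_succ_apply, pbar_succ_apply]
        have : gmap prec delta p0 (n + 1) (delta y) = gmap prec delta p0 n (delta y) := by
          refine eqR _ _ ?_ (deltaMemR hd.coassoc n y hy)
          intro a b hb
          rw [gmap_tmul, gmap_tmul, ihC b hb]
        rw [this]
      constructor
      · -- primitivity at level n+1
        intro y hy
        have hKC : delta (gmap prec delta p0 n (delta y)) =
            (TensorProduct.map (LinearMap.id : B →ₗ[K] B) (gmap prec delta p0 n) ∘ₗ
              (TensorProduct.assoc K B B B).toLinearMap ∘ₗ
              TensorProduct.map delta (LinearMap.id : B →ₗ[K] B)) (delta y) +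
            TensorProduct.map (LinearMap.id : B →ₗ[K] B) (pbar prec delta p0 n) (delta y) := by
          have := eqR (delta ∘ₗ gmap prec delta p0 n)
            ((TensorProduct.map (LinearMap.id : B →ₗ[K] B) (gmap prec delta p0 n) ∘ₗ
              (TensorProduct.assoc K B B B).toLinearMap ∘ₗ
              TensorProduct.map delta (LinearMap.id : B →ₗ[K] B)) +
              TensorProduct.map (LinearMap.id : B →ₗ[K] B) (pbar prec delta p0 n))
            ?_ (deltaMemR hd.coassoc n y hy)
          · simpa using this
          · intro a b hb
            have hSC : TensorProduct.map (LinearMap.id : B →ₗ[K] B) (gmap prec delta p0 n) ∘ₗ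
                (TensorProduct.assoc K B B B).toLinearMap ∘ₗ
                ((TensorProduct.mk K (B ⊗[K] B) B).flip b) =
                TensorProduct.map (LinearMap.id : B →ₗ[K] B)
                  (prec (pbar prec delta p0 n b)) := by
              apply TensorProduct.ext'
              intro c d
              simp [TensorProduct.assoc_tmul, gmap_tmul]
            have hSC' := DFunLike.congr_fun hSC (delta a)
            simp only [LinearMap.comp_apply, LinearMap.flip_apply, TensorProduct.mk_apply]
              at hSC'
            simp only [LinearMap.comp_apply, LinearMap.add_apply, TensorProduct.map_tmul,
              LinearMap.id_coe, id_eq, gmap_tmul]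
            rw [L1 hd (ihP b hb) a, hSC']
        rw [pbar_succ_apply, map_sub, hKC]
        have hco := DFunLike.congr_fun hd.coassoc y
        simp only [LinearMap.comp_apply] at hco
        rw [LinearMap.comp_apply, LinearMap.comp_apply, hco, ← LinearMap.comp_apply
          (TensorProduct.map _ _) (TensorProduct.map _ _), ← TensorProduct.map_comp,
          LinearMap.id_comp]
        have hfinal : TensorProduct.map (LinearMap.id : B →ₗ[K] B)
              (gmap prec delta p0 n ∘ₗ delta) (delta y) +
            TensorProduct.map (LinearMap.id : B →ₗ[K] B) (pbar prec delta p0 n) (delta y) =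
            delta y := by
          rw [← LinearMap.add_apply, ← TensorProduct.map_add_right]
          have := eqR (TensorProduct.map (LinearMap.id : B →ₗ[K] B)
              (gmap prec delta p0 n ∘ₗ delta + pbar prec delta p0 n))
            (TensorProduct.map (LinearMap.id : B →ₗ[K] B) (LinearMap.id : B →ₗ[K] B))
            ?_ (deltaMemR hd.coassoc n y hy)
          · rw [this, TensorProduct.map_id, LinearMap.id_apply]
          · intro a b hb
            simp only [TensorProduct.map_tmul, LinearMap.id_coe, id_eq, LinearMap.add_apply,
              LinearMap.comp_apply]
            have hb' : gmap prec delta p0 n (delta b) = b - pbar prec delta p0 (n + 1) b := by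
              rw [pbar_succ_apply]; abel
            rw [hb', ihC b hb]
            congr 1
            abel
        rw [hfinal]
        exact sub_self _
      · -- the A≺² defect at level n+1
        intro y hy
        rw [pbar_succ_apply]
        have : y - (y - gmap prec delta p0 n (delta y)) = gmap prec delta p0 n (delta y) := by
          abel
        rw [this]
        have hq : (Submodule.span K (genSet prec delta)).mkQ
            (gmap prec delta p0 n (delta y)) = 0 := by
          refine killR ((Submodule.span K (genSet prec delta)).mkQ ∘ₗ gmap prec delta p0 n)
            ?_ (deltaMemR hd.coassoc n y hy)
          intro a b hb
          simp only [LinearMap.comp_apply, gmap_tmul, Submodule.mkQ_apply]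
          rw [Submodule.Quotient.mk_eq_zero]
          exact Submodule.subset_span ⟨pbar prec delta p0 n b, ihP b hb, a, rfl⟩
        rwa [Submodule.mkQ_apply, Submodule.Quotient.mk_eq_zero] at hq

lemma pbar_agree : ∀ n k, k ≤ n → ∀ y ∈ coradFilt delta k,
    pbar prec delta p0 n y = pbar prec delta p0 k y := by
  intro n
  induction n with
  | zero => intro k hk y _; rw [Nat.le_zero.mp hk]
  | succ n ih =>
      intro k hk y hy
      rcases Nat.lt_or_ge k (n + 1) with h | h
      · have hk' : k ≤ n := Nat.lt_succ_iff.mp h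
        have hyn : y ∈ coradFilt delta n := coradFilt_mono delta hk' hy
        rw [(main hd h0V h0id n).1 y hyn, ih k hk' y hy]
      · have : k = n + 1 := le_antisymm hk h
        rw [this]

lemma pbar_prim {p : B} (hp : delta p = 0) (n : ℕ) : pbar prec delta p0 n p = p := by
  have h0 : p ∈ coradFilt delta 0 := hp
  rw [pbar_agree hd h0V h0id n 0 (Nat.zero_le n) p h0]
  exact h0id p hp

/-- The projections kill `Prim ≺ A_+` at sufficiently high levels. -/
lemma Zlem : ∀ m, ∀ w ∈ coradFilt delta m, ∀ p, delta p = 0 → ∀ n, m ≤ n →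
    pbar prec delta p0 (n + 1) (prec p w) = 0 := by
  intro m
  induction m with
  | zero =>
      intro w hw p hp n _
      have hw0 : delta w = 0 := hw
      rw [pbar_succ_apply, L1 hd hp w, hw0]
      simp [gmap_tmul, pbar_prim hd h0V h0id hp n]
  | succ m ih =>
      intro w hw p hp n hn
      obtain ⟨k, rfl⟩ : ∃ k, n = k + 1 := ⟨n - 1, by omega⟩
      have hk : m ≤ k := by omega
      rw [pbar_succ_apply, L1 hd hp w, map_add]
      have h1 : gmap prec delta p0 (k + 1)
          (TensorProduct.map (LinearMap.id : B →ₗ[K] B) (prec p) (delta w)) = 0 := by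
        refine killR (gmap prec delta p0 (k + 1) ∘ₗ
          TensorProduct.map (LinearMap.id : B →ₗ[K] B) (prec p)) ?_
          (deltaMemR hd.coassoc m w hw)
        intro a b hb
        simp only [LinearMap.comp_apply, TensorProduct.map_tmul, LinearMap.id_coe, id_eq,
          gmap_tmul]
        rw [ih b hb p hp k hk]
        simp
      rw [h1, gmap_tmul, pbar_prim hd h0V h0id hp (k + 1)]
      abel

end Main

end Stmt18Aux

open Stmt18Aux in
/-- in a connected dendriform Hopf algebra, with A^{≺2} = Prim(A) ≺ A_+:
(1) A_+ = Prim(A) ⊕ A^{≺2}; (2) A^{≺2} = A_+ ≺ A_+; (3) A^{≺2} is a left ideal for *. -/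
theorem stmt18 [CharZero K] (prec succ : B →ₗ[K] B →ₗ[K] B) (delta : B →ₗ[K] B ⊗[K] B)
    (hd : IsDendriformHopf prec succ delta) (hconn : IsConnectedCoalg delta) :
    letI A2 : Submodule K B :=
      Submodule.span K {z | ∃ p ∈ LinearMap.ker delta, ∃ w : B, z = prec p w}
    (LinearMap.ker delta ⊔ A2 = ⊤ ∧ Disjoint (LinearMap.ker delta) A2) ∧
    A2 = Submodule.span K {z | ∃ x y : B, z = prec x y} ∧
    (∀ x : B, ∀ y ∈ A2, (prec + succ) x y ∈ A2) := by
  set A2 : Submodule K B :=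
    Submodule.span K {z | ∃ p ∈ LinearMap.ker delta, ∃ w : B, z = prec p w} with hA2def
  have hA2 : A2 = Submodule.span K (genSet prec delta) := rfl
  -- construct p0 : a projection onto the primitives
  obtain ⟨Q, hQ⟩ := Submodule.exists_isCompl (LinearMap.ker delta)
  set p0 : B →ₗ[K] B :=
    (LinearMap.ker delta).subtype ∘ₗ Submodule.projectionOnto _ Q hQ with hp0
  have h0V : ∀ x, delta (p0 x) = 0 := by
    intro x
    exact LinearMap.mem_ker.mp (Submodule.projectionOnto _ Q hQ x).2
  have h0id : ∀ y ∈ LinearMap.ker delta, p0 y = y := by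
    intro y hy
    simp [hp0, Submodule.projectionOnto_apply_of_mem_left hQ hy]
  -- (1) sup
  have hsup : LinearMap.ker delta ⊔ A2 = ⊤ := by
    rw [eq_top_iff]
    intro x _
    obtain ⟨n, hn⟩ := hconn x
    refine Submodule.mem_sup.mpr ⟨pbar prec delta p0 n x, ?_, x - pbar prec delta p0 n x, ?_, by abel⟩
    · exact (main hd h0V h0id n).2.1 x hn
    · rw [hA2]; exact (main hd h0V h0id n).2.2 x hn
  -- (1) disjoint
  have hdisj : Disjoint (LinearMap.ker delta) A2 := by
    rw [Submodule.disjoint_def]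
    intro x hx1 hx2
    rw [hA2] at hx2
    obtain ⟨c, hcs, hcx⟩ := Submodule.mem_span_set.mp hx2
    have key : ∀ s : Finset B, ↑s ⊆ genSet prec delta →
        ∃ N, ∀ z ∈ s, ∀ n, N ≤ n → pbar prec delta p0 (n + 1) z = 0 := by
      classical
      intro s
      induction s using Finset.induction_on with
      | empty => exact fun _ => ⟨0, by simp⟩
      | @insert z s hzs ihs =>
          intro hsub
          obtain ⟨N', hN'⟩ := ihs fun t ht => hsub (Finset.mem_insert_of_mem ht)
          obtain ⟨p, hp, w, rfl⟩ := hsub (Finset.mem_insert_self z s)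
          obtain ⟨m, hm⟩ := hconn w
          refine ⟨max N' m, ?_⟩
          intro z' hz' n hn
          rcases Finset.mem_insert.mp hz' with h | h
          · rw [h]
            exact Zlem hd h0V h0id m w hm p hp n (le_trans (le_max_right N' m) hn)
          · exact hN' z' h n (le_trans (le_max_left N' m) hn)
    obtain ⟨N, hNz⟩ := key c.support hcs
    have h1 : pbar prec delta p0 (N + 1) x = 0 := by
      rw [← hcx, Finsupp.sum, map_sum]
      refine Finset.sum_eq_zero fun z hz => ?_
      rw [map_smul, hNz z hz N le_rfl, smul_zero]
    have h2 : pbar prec delta p0 (N + 1) x = x := by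
      have h0 : x ∈ coradFilt delta 0 := hx1
      rw [pbar_agree hd h0V h0id (N + 1) 0 (Nat.zero_le _) x h0]
      exact h0id x hx1
    rw [h2] at h1
    exact h1
  -- (2)
  have h2 : A2 = Submodule.span K {z | ∃ x y : B, z = prec x y} := by
    apply le_antisymm
    · rw [hA2]
      apply Submodule.span_mono
      rintro z ⟨p, _, w, rfl⟩
      exact ⟨p, w, rfl⟩
    · rw [Submodule.span_le]
      rintro z ⟨x, y, rfl⟩
      obtain ⟨n, hn⟩ := hconn x
      have hdec : x = pbar prec delta p0 n x + (x - pbar prec delta p0 n x) := by abel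
      have hxy : prec x y = prec (pbar prec delta p0 n x) y +
          prec (x - pbar prec delta p0 n x) y := by
        conv_lhs => rw [hdec]
        rw [map_add, LinearMap.add_apply]
      rw [SetLike.mem_coe, hxy]
      refine add_mem ?_ ?_
      · exact Submodule.subset_span ⟨pbar prec delta p0 n x, (main hd h0V h0id n).2.1 x hn, y, rfl⟩
      · have hq : x - pbar prec delta p0 n x ∈ A2 := by
          rw [hA2]; exact (main hd h0V h0id n).2.2 x hn
        have hle : A2 ≤ Submodule.comap (prec.flip y) A2 := by
          rw [hA2, Submodule.span_le]
          rintro z' ⟨p', hp', w', rfl⟩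
          simp only [SetLike.mem_coe, Submodule.mem_comap, LinearMap.flip_apply]
          rw [hd.ax1 p' w' y]
          exact Submodule.subset_span ⟨p', hp', _, rfl⟩
        exact hle hq
  refine ⟨⟨hsup, hdisj⟩, h2, ?_⟩
  -- (3)
  intro x y hy
  have hxy : (prec + succ) x y = prec x y + succ x y := by
    simp [LinearMap.add_apply]
  rw [hxy]
  refine add_mem ?_ ?_
  · rw [h2]
    exact Submodule.subset_span ⟨x, y, rfl⟩
  · have hle : A2 ≤ Submodule.comap (succ x) A2 := by
      conv_lhs => rw [h2]
      rw [Submodule.span_le]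
      rintro z' ⟨a, b, rfl⟩
      simp only [SetLike.mem_coe, Submodule.mem_comap]
      rw [← hd.ax2 x a b, h2]
      exact Submodule.subset_span ⟨succ x a, b, rfl⟩
    exact hle hy
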